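/- Let p be a prime and let x, y ∈ F_{p^2}^n with Hermitian inner product ⟨x,y⟩ ≠ 0. Then the function g(c) = ‖cx + y‖ (the Hermitian norm of cx+y), as c ranges over F_{p^2}, takes every value in F_p. -/

import Mathlib

open Polynomial Finset

theorem norm_affine_surjective (p n : ℕ) (hp : p.Prime) (F : Type*) [Field F] [Fintype F]
    (hF : Fintype.card F = p ^ 2)
    (x y : Fin n → F)
    (hxy : ∑ i, x i * (y i) ^ p ≠ 0) :
    ∀ k : F, k ^ p = k → ∃ c : F, ∑ i, (c * x i + y i) ^ (p + 1) = k := by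
  classical
  haveI : Fact p.Prime := ⟨hp⟩
  have hp1 : 1 < p := hp.one_lt
  have c1 : ¬ (1 = p + 1) := by omega
  have c2 : ¬ (1 = p) := by omega
  have hchar : CharP F p := by
    obtain ⟨q, hq⟩ := CharP.exists F
    haveI := hq
    obtain ⟨m, hqp, hcard⟩ := FiniteField.card F q
    have hdvd : q ∣ p ^ 2 := by
      rw [← hF, hcard]; exact dvd_pow_self q m.2.ne'
    have : q = p := (Nat.prime_dvd_prime_iff_eq hqp hp).mp (hqp.dvd_of_dvd_pow hdvd)
    rwa [this] at hq
  haveI := hchar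
  have hpow : ∀ a : F, a ^ (p ^ 2) = a := by
    intro a; rw [← hF]; exact FiniteField.pow_card a
  set A : F := ∑ i, x i ^ (p + 1) with hA
  set S : F := ∑ i, x i * (y i) ^ p with hS
  set C0 : F := ∑ i, y i ^ (p + 1) with hC0
  have hSp : S ^ p = ∑ i, x i ^ p * y i := by
    rw [hS, sum_pow_char]
    refine Finset.sum_congr rfl fun i _ => ?_
    rw [mul_pow, ← pow_mul]
    rw [show p * p = p ^ 2 by ring, hpow]
  set G : F → F := fun c => ∑ i, (c * x i + y i) ^ (p + 1) with hG
  have expand : ∀ c : F, G c = A * c ^ (p + 1) + S ^ p * c ^ p + S * c + C0 := by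
    intro c
    have h1 : ∀ i : Fin n, (c * x i + y i) ^ (p + 1) =
        x i ^ (p + 1) * c ^ (p + 1) + x i ^ p * y i * c ^ p + x i * y i ^ p * c
          + y i ^ (p + 1) := by
      intro i
      rw [pow_succ, add_pow_char, mul_pow]
      ring
    rw [hG]
    simp only [h1, Finset.sum_add_distrib, ← Finset.sum_mul]
    rw [hA, hS, hC0, hSp]
  have hfix : ∀ c : F, (G c) ^ p = G c := by
    intro c
    rw [hG]
    simp only
    rw [sum_pow_char]
    refine Finset.sum_congr rfl fun i _ => ?_
    rw [← pow_mul]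
    have : (p + 1) * p = p ^ 2 + p := by ring
    rw [this, pow_add, hpow, ← pow_succ']
  intro k hk
  by_contra hcon
  push_neg at hcon
  set P : F → F[X] := fun v =>
    Polynomial.C A * X ^ (p + 1) + Polynomial.C (S ^ p) * X ^ p + Polynomial.C S * X
      + Polynomial.C (C0 - v) with hP
  have hPeval : ∀ v c : F, (P v).eval c = G c - v := by
    intro v c
    rw [expand c]; simp [hP]; ring
  have hPne : ∀ v : F, P v ≠ 0 := by
    intro v hv
    have : (P v).coeff 1 = S := by
      simp only [hP, coeff_add, coeff_C_mul, coeff_X_pow, coeff_X, coeff_C]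
      simp [c1, c2, hp.ne_zero]
    rw [hv, coeff_zero] at this
    exact hxy this.symm
  have hPdeg : ∀ v : F, (P v).natDegree ≤ p + 1 := by
    intro v
    rw [hP]
    simp only
    refine (natDegree_add_le _ _).trans (max_le ((natDegree_add_le _ _).trans
      (max_le ((natDegree_add_le _ _).trans (max_le ?_ ?_)) ?_)) ?_)
    · exact (natDegree_C_mul_le _ _).trans (by simp)
    · exact (natDegree_C_mul_le _ _).trans (by simp)
    · exact (natDegree_C_mul_le _ _).trans (by simp [natDegree_X])
    · simp
  have hfiber : ∀ v : F, (univ.filter fun c => G c = v).card ≤ p + 1 := by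
    intro v
    have hsub : (univ.filter fun c => G c = v) ⊆ (P v).roots.toFinset := by
      intro c hc
      rw [Finset.mem_filter] at hc
      rw [Multiset.mem_toFinset, mem_roots (hPne v)]
      rw [IsRoot, hPeval, hc.2, sub_self]
    calc (univ.filter fun c => G c = v).card ≤ (P v).roots.toFinset.card :=
          Finset.card_le_card hsub
      _ ≤ Multiset.card (P v).roots := (P v).roots.toFinset_card_le
      _ ≤ (P v).natDegree := (P v).card_roots'
      _ ≤ p + 1 := hPdeg v
  set T : Finset F := univ.filter fun z => z ^ p = z with hT
  have hTcard : T.card ≤ p := by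
    have hq : (X ^ p - X : F[X]) ≠ 0 := by
      intro h
      have := congrArg (fun q => Polynomial.coeff q 1) h
      simp [coeff_X_pow, c2] at this
    have hsub : T ⊆ (X ^ p - X : F[X]).roots.toFinset := by
      intro z hz
      rw [hT, Finset.mem_filter] at hz
      rw [Multiset.mem_toFinset, mem_roots hq]
      simp [IsRoot, hz.2]
    calc T.card ≤ (X ^ p - X : F[X]).roots.toFinset.card := Finset.card_le_card hsub
      _ ≤ Multiset.card (X ^ p - X : F[X]).roots := Multiset.toFinset_card_le _
      _ ≤ (X ^ p - X : F[X]).natDegree := card_roots' _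
      _ ≤ p := by
          refine (natDegree_sub_le _ _).trans (max_le ?_ ?_) <;>
            simp [natDegree_X_pow, natDegree_X]
          omega
  have hkT : k ∈ T := by rw [hT, Finset.mem_filter]; exact ⟨Finset.mem_univ k, hk⟩
  have himg : (univ.image G) ⊆ T.erase k := by
    intro v hv
    rw [Finset.mem_image] at hv
    obtain ⟨c, _, rfl⟩ := hv
    refine Finset.mem_erase.mpr ⟨hcon c, ?_⟩
    rw [hT, Finset.mem_filter]
    exact ⟨Finset.mem_univ _, hfix c⟩
  have himgcard : (univ.image G).card ≤ p - 1 := by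
    calc (univ.image G).card ≤ (T.erase k).card := Finset.card_le_card himg
      _ = T.card - 1 := Finset.card_erase_of_mem hkT
      _ ≤ p - 1 := Nat.sub_le_sub_right hTcard 1
  have hcount : Fintype.card F ≤ (p - 1) * (p + 1) := by
    rw [← Finset.card_univ]
    rw [Finset.card_eq_sum_card_fiberwise
      (f := G) (t := univ.image G) (fun c _ => Finset.mem_image_of_mem G (mem_univ c))]
    calc ∑ v ∈ univ.image G, (univ.filter fun c => G c = v).card
        ≤ ∑ _v ∈ univ.image G, (p + 1) := Finset.sum_le_sum fun v _ => hfiber v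
      _ = (univ.image G).card * (p + 1) := by rw [Finset.sum_const, smul_eq_mul]
      _ ≤ (p - 1) * (p + 1) := Nat.mul_le_mul_right _ himgcard
  obtain ⟨q, rfl⟩ : ∃ q, p = q + 1 := ⟨p - 1, by omega⟩
  rw [hF] at hcount
  simp only [Nat.add_sub_cancel] at hcount
  ring_nf at hcount
  linarith
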